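/- For positive definite n×n matrices A and B, d_h(A,B) ≤ √2 · d_b(A,B), where d_b(A,B) = (Tr(A+B) - 2Tr((A^(1/2)BA^(1/2))^(1/2)))^(1/2) and d_h(A,B) = (Tr(A+B) - 2Tr(A^(1/2)B^(1/2)))^(1/2). -/

import Mathlib

open Matrix ComplexOrder

/-- Matrix power via functional calculus (spectral decomposition), for Hermitian matrices. -/
noncomputable def mpow {n : Type*} [Fintype n] [DecidableEq n]
    (A : Matrix n n ℂ) (p : ℝ) : Matrix n n ℂ :=
  if hA : A.IsHermitian then
    (hA.eigenvectorUnitary : Matrix n n ℂ) *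
      Matrix.diagonal (fun i => ((hA.eigenvalues i ^ p : ℝ) : ℂ)) *
      star (hA.eigenvectorUnitary : Matrix n n ℂ)
  else 0

/-- Hellinger distance. -/
noncomputable def dh {n : Type*} [Fintype n] [DecidableEq n]
    (A B : Matrix n n ℂ) : ℝ :=
  Real.sqrt ((Matrix.trace (A + B)).re
    - 2 * (Matrix.trace (mpow A (1/2) * mpow B (1/2))).re)

/-- Bures–Wasserstein distance. -/
noncomputable def db {n : Type*} [Fintype n] [DecidableEq n]
    (A B : Matrix n n ℂ) : ℝ :=
  Real.sqrt ((Matrix.trace (A + B)).re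
    - 2 * (Matrix.trace (mpow (mpow A (1/2) * B * mpow A (1/2)) (1/2))).re)

/-- Log-determinant distance. -/
noncomputable def dl {n : Type*} [Fintype n] [DecidableEq n]
    (A B : Matrix n n ℂ) : ℝ :=
  Real.log (((A + B) / 2).det).re
    - (1/2) * (Real.log (A.det.re) + Real.log (B.det.re))

/-- Matrix power mean μ_p(t;A,B) = (t A^p + (1-t) B^p)^{1/p}. -/
noncomputable def mpm {n : Type*} [Fintype n] [DecidableEq n]
    (p t : ℝ) (A B : Matrix n n ℂ) : Matrix n n ℂ :=
  mpow ((t : ℂ) • mpow A p + ((1 - t : ℝ) : ℂ) • mpow B p) (1/p)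

/-- Weighted geometric mean A ♯_t B. -/
noncomputable def sharp {n : Type*} [Fintype n] [DecidableEq n]
    (t : ℝ) (A B : Matrix n n ℂ) : Matrix n n ℂ :=
  mpow A (1/2) * mpow (mpow A (-(1/2)) * B * mpow A (-(1/2))) t * mpow A (1/2)

/-- Quantum fidelity. -/
noncomputable def fid {n : Type*} [Fintype n] [DecidableEq n]
    (A B : Matrix n n ℂ) : ℝ :=
  ((Matrix.trace (mpow (mpow A (1/2) * B * mpow A (1/2)) (1/2))).re) ^ 2

section Aux
variable {n : Type*} [Fintype n] [DecidableEq n]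

lemma mpow_eq {A : Matrix n n ℂ} (hA : A.IsHermitian) (p : ℝ) :
    mpow A p = (hA.eigenvectorUnitary : Matrix n n ℂ) *
      Matrix.diagonal (fun i => ((hA.eigenvalues i ^ p : ℝ) : ℂ)) *
      star (hA.eigenvectorUnitary : Matrix n n ℂ) := dif_pos hA

lemma unit_mul_star {A : Matrix n n ℂ} (hA : A.IsHermitian) :
    (hA.eigenvectorUnitary : Matrix n n ℂ) * star (hA.eigenvectorUnitary : Matrix n n ℂ) = 1 :=
  (Matrix.mem_unitaryGroup_iff).mp (hA.eigenvectorUnitary).2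

lemma star_mul_unit {A : Matrix n n ℂ} (hA : A.IsHermitian) :
    star (hA.eigenvectorUnitary : Matrix n n ℂ) * (hA.eigenvectorUnitary : Matrix n n ℂ) = 1 :=
  (Matrix.mem_unitaryGroup_iff').mp (hA.eigenvectorUnitary).2

lemma mpow_mul_mpow {A : Matrix n n ℂ} (hA : A.PosDef) (p q : ℝ) :
    mpow A p * mpow A q = mpow A (p + q) := by
  rw [mpow_eq hA.1 p, mpow_eq hA.1 q, mpow_eq hA.1 (p + q)]
  set U := (hA.1.eigenvectorUnitary : Matrix n n ℂ)
  calc U * Matrix.diagonal (fun i => ((hA.1.eigenvalues i ^ p : ℝ) : ℂ)) * star U *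
        (U * Matrix.diagonal (fun i => ((hA.1.eigenvalues i ^ q : ℝ) : ℂ)) * star U)
      = U * (Matrix.diagonal (fun i => ((hA.1.eigenvalues i ^ p : ℝ) : ℂ)) * (star U * U) *
          Matrix.diagonal (fun i => ((hA.1.eigenvalues i ^ q : ℝ) : ℂ))) * star U := by
        simp only [Matrix.mul_assoc]
    _ = U * Matrix.diagonal (fun i => ((hA.1.eigenvalues i ^ (p + q) : ℝ) : ℂ)) * star U := by
        rw [star_mul_unit hA.1, Matrix.mul_one, Matrix.diagonal_mul_diagonal]
        have he : ∀ i, ((hA.1.eigenvalues i ^ p : ℝ) : ℂ) * ((hA.1.eigenvalues i ^ q : ℝ) : ℂ)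
            = ((hA.1.eigenvalues i ^ (p + q) : ℝ) : ℂ) := fun i => by
          rw [← Complex.ofReal_mul, ← Real.rpow_add (hA.eigenvalues_pos i)]
        simp only [he, Matrix.mul_assoc]

lemma mpow_zero {A : Matrix n n ℂ} (hA : A.IsHermitian) : mpow A 0 = 1 := by
  rw [mpow_eq hA 0]
  simp only [Real.rpow_zero, Complex.ofReal_one, Matrix.diagonal_one, Matrix.mul_one]
  exact unit_mul_star hA

lemma mpow_one {A : Matrix n n ℂ} (hA : A.IsHermitian) : mpow A 1 = A := by
  rw [mpow_eq hA 1]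
  simp only [Real.rpow_one]
  exact hA.spectral_theorem.symm

lemma posDef_conj {B D : Matrix n n ℂ} (hB : B.PosDef) (hD : IsUnit D) :
    (Dᴴ * B * D).PosDef := by
  exact hB.conjTranspose_mul_mul_same ((Matrix.mulVec_injective_iff_isUnit).mpr hD)

lemma mpow_posDef {A : Matrix n n ℂ} (hA : A.PosDef) (p : ℝ) : (mpow A p).PosDef := by
  rw [mpow_eq hA.1 p]
  set U := (hA.1.eigenvectorUnitary : Matrix n n ℂ) with hU
  have hdiag : (Matrix.diagonal (fun i => ((hA.1.eigenvalues i ^ p : ℝ) : ℂ))).PosDef :=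
    Matrix.posDef_diagonal_iff.mpr fun i => by
      exact_mod_cast Complex.zero_lt_real.mpr (Real.rpow_pos_of_pos (hA.eigenvalues_pos i) p)
  have hUu : IsUnit (star U) := IsUnit.star ⟨⟨U, star U, unit_mul_star hA.1, star_mul_unit hA.1⟩, rfl⟩
  have := posDef_conj hdiag hUu
  simpa only [Matrix.star_eq_conjTranspose, Matrix.conjTranspose_conjTranspose] using this

lemma mpow_isHermitian {A : Matrix n n ℂ} (hA : A.PosDef) (p : ℝ) :
    (mpow A p)ᴴ = mpow A p := (mpow_posDef hA p).1

lemma trace_conj_mul (X Y : Matrix n n ℂ) :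
    Matrix.trace (Xᴴ * Y) = ∑ p : n × n, (starRingEnd ℂ) (X p.1 p.2) * Y p.1 p.2 := by
  rw [Matrix.trace, Fintype.sum_prod_type]
  simp only [Matrix.diag, Matrix.mul_apply, Matrix.conjTranspose_apply, Matrix.star_apply]
  rw [Finset.sum_comm]
  rfl

lemma trace_self_re_nonneg (X : Matrix n n ℂ) : 0 ≤ (Matrix.trace (Xᴴ * X)).re := by
  rw [trace_conj_mul, Complex.re_sum]
  refine Finset.sum_nonneg fun p _ => ?_
  rw [← Complex.normSq_eq_conj_mul_self]
  simpa using Complex.normSq_nonneg _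

lemma trace_self_re_eq (X : Matrix n n ℂ) :
    (Matrix.trace (Xᴴ * X)).re = ∑ p : n × n, ‖X p.1 p.2‖ ^ 2 := by
  rw [trace_conj_mul, Complex.re_sum]
  refine Finset.sum_congr rfl fun p _ => ?_
  rw [← Complex.normSq_eq_conj_mul_self, Complex.ofReal_re, Complex.normSq_eq_norm_sq]

lemma trace_cauchy_schwarz (X Y : Matrix n n ℂ) :
    (Matrix.trace (Xᴴ * Y)).re ≤
      Real.sqrt (Matrix.trace (Xᴴ * X)).re * Real.sqrt (Matrix.trace (Yᴴ * Y)).re := by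
  let v : EuclideanSpace ℂ (n × n) := WithLp.toLp 2 (fun p : n × n => X p.1 p.2)
  let w : EuclideanSpace ℂ (n × n) := WithLp.toLp 2 (fun p : n × n => Y p.1 p.2)
  have h1 : Matrix.trace (Xᴴ * Y) = inner (𝕜 := ℂ) v w := by
    rw [trace_conj_mul, PiLp.inner_apply]
    refine Finset.sum_congr rfl fun p _ => ?_
    simp [v, w, mul_comm]
  have h2 : Real.sqrt (Matrix.trace (Xᴴ * X)).re = ‖v‖ := by
    rw [trace_self_re_eq, EuclideanSpace.norm_eq]
  have h3 : Real.sqrt (Matrix.trace (Yᴴ * Y)).re = ‖w‖ := by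
    rw [trace_self_re_eq, EuclideanSpace.norm_eq]
  rw [h1, h2, h3]
  exact re_inner_le_norm (𝕜 := ℂ) v w

end Aux

theorem stmt7 {n : Type*} [Fintype n] [DecidableEq n]
    {A B : Matrix n n ℂ} (hA : A.PosDef) (hB : B.PosDef) :
    dh A B ≤ Real.sqrt 2 * db A B := by
  unfold dh db
  set C := mpow A (1/2) with hCdef
  set D := mpow B (1/2) with hDdef
  set E := mpow A (1/4) with hEdef
  set F := mpow B (1/4) with hFdef
  set M := C * B * C with hMdef
  set S := mpow M (1/2) with hSdef
  set S' := mpow M (-(1/2)) with hS'def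
  have hC : C.PosDef := mpow_posDef hA _
  have hD : D.PosDef := mpow_posDef hB _
  have hCh : Cᴴ = C := mpow_isHermitian hA _
  have hDh : Dᴴ = D := mpow_isHermitian hB _
  have hEh : Eᴴ = E := mpow_isHermitian hA _
  have hFh : Fᴴ = F := mpow_isHermitian hB _
  have hM : M.PosDef := by
    rw [hMdef]
    nth_rewrite 1 [← hCh]
    exact posDef_conj hB hC.isUnit
  have hS'h : S'ᴴ = S' := mpow_isHermitian hM _
  have hCC : C * C = A := by
    rw [hCdef, mpow_mul_mpow hA, show (1/2 + 1/2 : ℝ) = 1 by norm_num, mpow_one hA.1]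
  have hDD : D * D = B := by
    rw [hDdef, mpow_mul_mpow hB, show (1/2 + 1/2 : ℝ) = 1 by norm_num, mpow_one hB.1]
  have hEE : E * E = C := by
    rw [hEdef, mpow_mul_mpow hA, show (1/4 + 1/4 : ℝ) = 1/2 by norm_num, hCdef]
  have hFF : F * F = D := by
    rw [hFdef, mpow_mul_mpow hB, show (1/4 + 1/4 : ℝ) = 1/2 by norm_num, hDdef]
  have hSS : S * S = M := by
    rw [hSdef, mpow_mul_mpow hM, show (1/2 + 1/2 : ℝ) = 1 by norm_num, mpow_one hM.1]
  have hS'S : S' * S = 1 := by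
    rw [hSdef, hS'def, mpow_mul_mpow hM, show (-(1/2) + 1/2 : ℝ) = 0 by norm_num, mpow_zero hM.1]
  have hSS' : S * S' = 1 := by
    rw [hSdef, hS'def, mpow_mul_mpow hM, show (1/2 + -(1/2) : ℝ) = 0 by norm_num, mpow_zero hM.1]
  set W := S' * C * D with hWdef
  have hWh : Wᴴ = D * (C * S') := by
    rw [hWdef, Matrix.conjTranspose_mul, Matrix.conjTranspose_mul, hCh, hDh, hS'h]
  have hWW : W * Wᴴ = 1 := by
    rw [hWh, hWdef]
    calc S' * C * D * (D * (C * S'))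
        = S' * (C * (D * (D * (C * S')))) := by simp only [Matrix.mul_assoc]
      _ = S' * (C * (B * (C * S'))) := by rw [← Matrix.mul_assoc D D (C * S'), hDD]
      _ = S' * (M * S') := by rw [hMdef]; simp only [Matrix.mul_assoc]
      _ = 1 := by rw [← hSS, Matrix.mul_assoc S S S', hSS', Matrix.mul_one, hS'S]
  have hWW' : Wᴴ * W = 1 := mul_eq_one_comm.mp hWW
  have eqS : Matrix.trace ((E * W * F)ᴴ * (E * F)) = Matrix.trace S := by
    calc Matrix.trace ((E * W * F)ᴴ * (E * F))
        = Matrix.trace (F * (Wᴴ * (E * (E * F)))) := by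
          rw [Matrix.conjTranspose_mul, Matrix.conjTranspose_mul, hEh, hFh]
          simp only [Matrix.mul_assoc]
      _ = Matrix.trace ((Wᴴ * (E * (E * F))) * F) := Matrix.trace_mul_comm _ _
      _ = Matrix.trace (Wᴴ * (C * D)) := by
          simp only [Matrix.mul_assoc]
          rw [hFF, ← Matrix.mul_assoc E E D, hEE]
      _ = Matrix.trace ((C * D) * Wᴴ) := Matrix.trace_mul_comm _ _
      _ = Matrix.trace S := by
          rw [hWh, Matrix.mul_assoc C D (D * (C * S')), ← Matrix.mul_assoc D D (C * S'), hDD,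
            show C * (B * (C * S')) = M * S' from by rw [hMdef]; simp only [Matrix.mul_assoc],
            ← hSS, Matrix.mul_assoc S S S', hSS', Matrix.mul_one]
  have eqG : Matrix.trace ((E * W * F)ᴴ * (E * W * F)) = Matrix.trace (Wᴴ * (C * (W * D))) := by
    calc Matrix.trace ((E * W * F)ᴴ * (E * W * F))
        = Matrix.trace (F * (Wᴴ * (E * (E * (W * F))))) := by
          rw [Matrix.conjTranspose_mul, Matrix.conjTranspose_mul, hEh, hFh]
          simp only [Matrix.mul_assoc]
      _ = Matrix.trace ((Wᴴ * (E * (E * (W * F)))) * F) := Matrix.trace_mul_comm _ _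
      _ = Matrix.trace (Wᴴ * (C * (W * D))) := by
          simp only [Matrix.mul_assoc]
          rw [hFF, ← Matrix.mul_assoc E E (W * D), hEE]
  have eqH : Matrix.trace ((E * F)ᴴ * (E * F)) = Matrix.trace (C * D) := by
    calc Matrix.trace ((E * F)ᴴ * (E * F))
        = Matrix.trace (F * (E * (E * F))) := by
          rw [Matrix.conjTranspose_mul, hEh, hFh]
          simp only [Matrix.mul_assoc]
      _ = Matrix.trace ((E * (E * F)) * F) := Matrix.trace_mul_comm _ _
      _ = Matrix.trace (C * D) := by
          simp only [Matrix.mul_assoc]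
          rw [hFF, ← Matrix.mul_assoc E E D, hEE]
  have eqG2 : Matrix.trace ((C * W)ᴴ * (W * D)) = Matrix.trace (Wᴴ * (C * (W * D))) := by
    rw [Matrix.conjTranspose_mul, hCh]
    simp only [Matrix.mul_assoc]
  have eqA : Matrix.trace ((C * W)ᴴ * (C * W)) = Matrix.trace A := by
    rw [Matrix.conjTranspose_mul, hCh,
      show (Wᴴ * C) * (C * W) = Wᴴ * (C * (C * W)) from by simp only [Matrix.mul_assoc],
      Matrix.trace_mul_comm]
    simp only [Matrix.mul_assoc]
    rw [hWW, Matrix.mul_one, hCC]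
  have eqB : Matrix.trace ((W * D)ᴴ * (W * D)) = Matrix.trace B := by
    rw [Matrix.conjTranspose_mul, hDh,
      show (D * Wᴴ) * (W * D) = D * ((Wᴴ * W) * D) from by simp only [Matrix.mul_assoc],
      hWW', Matrix.one_mul, hDD]
  have amgm : ∀ x y : ℝ, 0 ≤ x → 0 ≤ y →
      2 * (Real.sqrt x * Real.sqrt y) ≤ x + y := fun x y hx hy => by
    nlinarith [sq_nonneg (Real.sqrt x - Real.sqrt y), Real.sq_sqrt hx, Real.sq_sqrt hy]
  have hf : (Matrix.trace S).re ≤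
      Real.sqrt (Matrix.trace (Wᴴ * (C * (W * D)))).re * Real.sqrt (Matrix.trace (C * D)).re := by
    have := trace_cauchy_schwarz (E * W * F) (E * F)
    rwa [eqS, eqG, eqH] at this
  have hg : (Matrix.trace (Wᴴ * (C * (W * D)))).re ≤
      Real.sqrt (Matrix.trace A).re * Real.sqrt (Matrix.trace B).re := by
    have := trace_cauchy_schwarz (C * W) (W * D)
    rwa [eqG2, eqA, eqB] at this
  have hg0 : 0 ≤ (Matrix.trace (Wᴴ * (C * (W * D)))).re := by
    have := trace_self_re_nonneg (E * W * F); rwa [eqG] at this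
  have hh0 : 0 ≤ (Matrix.trace (C * D)).re := by
    have := trace_self_re_nonneg (E * F); rwa [eqH] at this
  have ha0 : 0 ≤ (Matrix.trace A).re := by
    have := trace_self_re_nonneg (C * W); rwa [eqA] at this
  have hb0 : 0 ≤ (Matrix.trace B).re := by
    have := trace_self_re_nonneg (W * D); rwa [eqB] at this
  have key : 4 * (Matrix.trace S).re ≤
      (Matrix.trace A).re + (Matrix.trace B).re + 2 * (Matrix.trace (C * D)).re := by
    have am1 := amgm _ _ hg0 hh0
    have am2 := amgm _ _ ha0 hb0
    linarith [hf, hg, am1, am2]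
  have hT : (Matrix.trace (A + B)).re = (Matrix.trace A).re + (Matrix.trace B).re := by
    rw [Matrix.trace_add, Complex.add_re]
  rw [hT, ← Real.sqrt_mul (by norm_num : (0:ℝ) ≤ 2)]
  apply Real.sqrt_le_sqrt
  linarith [key]
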